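/- Every connected graph G of order n ≥ 3 satisfies γ_{r2}(G) ≤ 3n/4. -/

import Mathlib

open Finset

/-- A `k`-rainbow dominating function: every vertex assigned `∅` sees all `k` colors
among its neighbors. -/
def SimpleGraph.IsRainbowDF {V : Type*} {k : ℕ} (G : SimpleGraph V)
    (f : V → Finset (Fin k)) : Prop :=
  ∀ v, f v = ∅ → ∀ c : Fin k, ∃ u, G.Adj v u ∧ c ∈ f u

/-- The `k`-rainbow domination number. -/
noncomputable def SimpleGraph.rainbowNum {V : Type*} [Fintype V] (G : SimpleGraph V)
    (k : ℕ) : ℕ :=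
  sInf {w | ∃ f : V → Finset (Fin k), G.IsRainbowDF f ∧ w = ∑ v, (f v).card}

/-- `S` is a dominating set of `G`. -/
def SimpleGraph.IsDomSet {V : Type*} (G : SimpleGraph V) (S : Set V) : Prop :=
  ∀ v, v ∉ S → ∃ u ∈ S, G.Adj v u

/-- The domination number. -/
noncomputable def SimpleGraph.domNum {V : Type*} [Fintype V] (G : SimpleGraph V) : ℕ :=
  sInf {n | ∃ S : Finset V, G.IsDomSet ↑S ∧ n = S.card}

namespace RainbowAux
set_option linter.unusedSectionVars false
variable {V : Type*} [Fintype V] (G : SimpleGraph V) (r : V)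

def NC (v : V) : Prop := ∀ w, G.Adj v w → G.dist r w ≠ G.dist r v + 1

def HCC (v : V) : Prop := ∃ u, G.Adj v u ∧ G.dist r u = G.dist r v + 1 ∧ NC G r u

open Classical in
noncomputable def rdf (t : ℕ) (v : V) : Finset (Fin 2) :=
  if (G.dist r v + t) % 4 = 0 then (if HCC G r v then Finset.univ else {1})
  else if (G.dist r v + t) % 4 = 1 then (∅ : Finset (Fin 2))
  else if (G.dist r v + t) % 4 = 2 then {0}
  else if NC G r v then {1} else ∅

variable {G r}
variable {t : ℕ} {v : V}

open Classical in
lemma rdf_val0 (h : (G.dist r v + t) % 4 = 0) :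
    rdf G r t v = if HCC G r v then Finset.univ else {1} := by
  rw [rdf, if_pos h]

lemma rdf_val1 (h : (G.dist r v + t) % 4 = 1) : rdf G r t v = ∅ := by
  rw [rdf, if_neg (by omega), if_pos h]

lemma rdf_val2 (h : (G.dist r v + t) % 4 = 2) : rdf G r t v = {0} := by
  rw [rdf, if_neg (by omega), if_neg (by omega), if_pos h]

open Classical in
lemma rdf_val3 (h : (G.dist r v + t) % 4 = 3) :
    rdf G r t v = if NC G r v then {1} else ∅ := by
  rw [rdf, if_neg (by omega), if_neg (by omega), if_neg (by omega)]

lemma NC.not_HCC (h : NC G r v) : ¬ HCC G r v := by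
  rintro ⟨u, hadj, hd, -⟩; exact h u hadj hd

lemma exists_parent (hG : G.Connected) (h : G.dist r v ≠ 0) :
    ∃ p, G.Adj v p ∧ G.dist r p + 1 = G.dist r v := by
  obtain ⟨w, hw⟩ := hG.exists_walk_length_eq_dist v r
  cases w with
  | nil => rw [SimpleGraph.Walk.length_nil, eq_comm, SimpleGraph.dist_comm] at hw; exact absurd hw h
  | @cons _ u _ hadj p =>
    refine ⟨u, hadj, ?_⟩
    have h1 : G.dist r u ≤ p.length := by
      rw [SimpleGraph.dist_comm]; exact SimpleGraph.dist_le p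
    have h2 : G.dist r v ≤ G.dist r u + 1 := by
      have := hG.dist_triangle (u := r) (v := u) (w := v)
      have hd : G.dist u v = 1 := SimpleGraph.dist_eq_one_iff_adj.mpr hadj.symm
      omega
    rw [SimpleGraph.Walk.length_cons, SimpleGraph.dist_comm] at hw
    omega

lemma adj_root_dist (hadj : G.Adj r v) : G.dist r v = 1 :=
  SimpleGraph.dist_eq_one_iff_adj.mpr hadj

lemma dist_zero_iff (hG : G.Connected) : G.dist r v = 0 ↔ v = r := by
  rw [hG.dist_eq_zero_iff, eq_comm]

lemma exists_dist_eq (hG : G.Connected) :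
    ∀ (n : ℕ) (v : V), G.dist r v = n → ∀ m, m ≤ n → ∃ w : V, G.dist r w = m := by
  intro n
  induction n with
  | zero => intro v h m hm; refine ⟨v, ?_⟩; omega
  | succ k ih =>
    intro v h m hm
    by_cases h1 : m = k + 1
    · refine ⟨v, ?_⟩; omega
    · obtain ⟨p, -, hp⟩ := exists_parent (r := r) (v := v) hG (by omega)
      exact ih p (by omega) m (by omega)

lemma P1 (hG : G.Connected) (hvr : v ≠ r) (h : (G.dist r v + t) % 4 = 1) (c : Fin 2) :
    ∃ u, G.Adj v u ∧ c ∈ rdf G r t u ∧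
      (G.dist r u + 1 = G.dist r v ∨ G.dist r u = G.dist r v + 1) := by
  have hd0 : G.dist r v ≠ 0 := fun h0 => hvr ((dist_zero_iff hG).mp h0)
  obtain ⟨p, hadj, hp⟩ := exists_parent (r := r) (v := v) hG hd0
  have hpos : (G.dist r p + t) % 4 = 0 := by omega
  fin_cases c
  · by_cases hcc : HCC G r p
    · refine ⟨p, hadj, ?_, Or.inl hp⟩
      rw [rdf_val0 hpos, if_pos hcc]; simp
    · have hnc : ¬ NC G r v := fun hnc => hcc ⟨v, hadj.symm, by omega, hnc⟩
      rw [NC] at hnc; push_neg at hnc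
      obtain ⟨u, hu, hud⟩ := hnc
      refine ⟨u, hu, ?_, Or.inr hud⟩
      rw [rdf_val2 (by omega)]; simp
  · refine ⟨p, hadj, ?_, Or.inl hp⟩
    rw [rdf_val0 hpos]
    by_cases hcc : HCC G r p <;> simp [hcc]

lemma P3 (hG : G.Connected) (hvr : v ≠ r) (h : (G.dist r v + t) % 4 = 3)
    (hnc : ¬ NC G r v) (c : Fin 2) :
    ∃ u, G.Adj v u ∧ c ∈ rdf G r t u ∧
      (G.dist r u + 1 = G.dist r v ∨ G.dist r u = G.dist r v + 1) := by
  have hd0 : G.dist r v ≠ 0 := fun h0 => hvr ((dist_zero_iff hG).mp h0)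
  fin_cases c
  · obtain ⟨p, hadj, hp⟩ := exists_parent (r := r) (v := v) hG hd0
    refine ⟨p, hadj, ?_, Or.inl hp⟩
    rw [rdf_val2 (by omega)]; simp
  · rw [NC] at hnc; push_neg at hnc
    obtain ⟨u, hu, hud⟩ := hnc
    refine ⟨u, hu, ?_, Or.inr hud⟩
    rw [rdf_val0 (by omega)]
    by_cases hcc : HCC G r u <;> simp [hcc]

open Classical in
lemma qsum4 (v : V) :
    (rdf G r 0 v).card + (rdf G r 1 v).card + (rdf G r 2 v).card + (rdf G r 3 v).card ≤ 3 := by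
  have h4 : G.dist r v % 4 = 0 ∨ G.dist r v % 4 = 1 ∨ G.dist r v % 4 = 2 ∨ G.dist r v % 4 = 3 := by
    omega
  have key : ∀ a b : Finset (Fin 2),
      (a = if HCC G r v then Finset.univ else {1}) →
      (b = if NC G r v then {1} else ∅) → a.card + b.card ≤ 2 := by
    intro a b ha hb
    by_cases hnc : NC G r v
    · rw [ha, hb, if_neg hnc.not_HCC, if_pos hnc]; simp
    · by_cases hcc : HCC G r v
      · rw [ha, hb, if_pos hcc, if_neg hnc]; simp
      · rw [ha, hb, if_neg hcc, if_neg hnc]; simp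
  rcases h4 with h|h|h|h
  · rw [rdf_val1 (G := G) (r := r) (v := v) (t := 1) (by omega),
      rdf_val2 (G := G) (r := r) (v := v) (t := 2) (by omega)]
    have := key _ _ (rdf_val0 (G := G) (r := r) (v := v) (t := 0) (by omega))
      (rdf_val3 (G := G) (r := r) (v := v) (t := 3) (by omega))
    simp only [Finset.card_empty, Finset.card_singleton]
    omega
  · rw [rdf_val1 (G := G) (r := r) (v := v) (t := 0) (by omega),
      rdf_val2 (G := G) (r := r) (v := v) (t := 1) (by omega)]
    have := key _ _ (rdf_val0 (G := G) (r := r) (v := v) (t := 3) (by omega))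
      (rdf_val3 (G := G) (r := r) (v := v) (t := 2) (by omega))
    simp only [Finset.card_empty, Finset.card_singleton]
    omega
  · rw [rdf_val1 (G := G) (r := r) (v := v) (t := 3) (by omega),
      rdf_val2 (G := G) (r := r) (v := v) (t := 0) (by omega)]
    have := key _ _ (rdf_val0 (G := G) (r := r) (v := v) (t := 2) (by omega))
      (rdf_val3 (G := G) (r := r) (v := v) (t := 1) (by omega))
    simp only [Finset.card_empty, Finset.card_singleton]
    omega
  · rw [rdf_val1 (G := G) (r := r) (v := v) (t := 2) (by omega),
      rdf_val2 (G := G) (r := r) (v := v) (t := 3) (by omega)]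
    have := key _ _ (rdf_val0 (G := G) (r := r) (v := v) (t := 1) (by omega))
      (rdf_val3 (G := G) (r := r) (v := v) (t := 0) (by omega))
    simp only [Finset.card_empty, Finset.card_singleton]
    omega

lemma valid_main (hG : G.Connected) (t : ℕ) (F : V → Finset (Fin 2))
    (hne : ∀ v, v ≠ r → F v = ∅ → rdf G r t v = ∅)
    (hagree : ∀ u, u ≠ r → (¬ NC G r u ∨ 2 ≤ G.dist r u) → F u = rdf G r t u)
    (hagree_root : t % 4 = 0 ∨ t % 4 = 2 → F r = rdf G r t r)
    (hrootval : F r = ∅ → ∀ c : Fin 2, ∃ u, G.Adj r u ∧ c ∈ F u) :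
    G.IsRainbowDF F := by
  intro v hv c
  by_cases hvr : v = r
  · subst hvr; exact hrootval hv c
  · have hv' : rdf G r t v = ∅ := hne v hvr hv
    have hd0 : G.dist r v ≠ 0 := fun h0 => hvr ((dist_zero_iff hG).mp h0)
    have hcases : (G.dist r v + t) % 4 = 1 ∨ ((G.dist r v + t) % 4 = 3 ∧ ¬ NC G r v) := by
      by_cases h0 : (G.dist r v + t) % 4 = 0
      · exfalso
        rw [rdf_val0 h0] at hv'
        by_cases h2 : HCC G r v
        · rw [if_pos h2] at hv'
          exact Finset.univ_nonempty.ne_empty hv'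
        · rw [if_neg h2] at hv'; simp at hv'
      by_cases h1 : (G.dist r v + t) % 4 = 1
      · exact Or.inl h1
      by_cases h2' : (G.dist r v + t) % 4 = 2
      · rw [rdf_val2 h2'] at hv'; simp at hv'
      have h3 : (G.dist r v + t) % 4 = 3 := by omega
      rw [rdf_val3 h3] at hv'
      by_cases hnc : NC G r v
      · rw [if_pos hnc] at hv'; simp at hv'
      · exact Or.inr ⟨h3, hnc⟩
    have hw : ∃ u, G.Adj v u ∧ c ∈ rdf G r t u ∧
        (G.dist r u + 1 = G.dist r v ∨ G.dist r u = G.dist r v + 1) := by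
      rcases hcases with h | ⟨h, hnc⟩
      · exact P1 hG hvr h c
      · exact P3 hG hvr h hnc c
    obtain ⟨u, hadj, hmem, hlev⟩ := hw
    refine ⟨u, hadj, ?_⟩
    by_cases hur : u = r
    · have hdr : G.dist r r = 0 := SimpleGraph.dist_self
      rw [hur] at hlev hmem
      have hdv : G.dist r v = 1 := by omega
      have ht : t % 4 = 0 ∨ t % 4 = 2 := by
        rcases hcases with h | ⟨h, -⟩ <;> omega
      rw [hur, hagree_root ht]; exact hmem
    · have hcond : ¬ NC G r u ∨ 2 ≤ G.dist r u := by
        rcases hlev with h | h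
        · left; intro hNC; exact hNC v hadj.symm (by omega)
        · right; omega
      rw [hagree u hur hcond]; exact hmem

end RainbowAux

open RainbowAux in
/-- Every connected graph of order `n ≥ 3` satisfies `γ_{r2}(G) ≤ 3n/4`. -/
theorem rainbow2_le_three_quarters_of_connected {V : Type*} [Fintype V]
    (G : SimpleGraph V) (hG : G.Connected) (hn : 3 ≤ Fintype.card V) :
    4 * G.rainbowNum 2 ≤ 3 * Fintype.card V := by
  classical
  obtain ⟨r⟩ : Nonempty V := Fintype.card_pos_iff.mp (by omega)
  -- the root has a neighbor `w1` at distance 1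
  obtain ⟨v1, hv1⟩ := Fintype.exists_ne_of_one_lt_card (by omega : 1 < Fintype.card V) r
  have hd1 : G.dist r v1 ≠ 0 := fun h => hv1 ((dist_zero_iff hG).mp h)
  obtain ⟨w1, hw1⟩ := exists_dist_eq (r := r) hG (G.dist r v1) v1 rfl 1 (by omega)
  have hw1adj : G.Adj r w1 := SimpleGraph.dist_eq_one_iff_adj.mp hw1
  have hdrr : G.dist r r = 0 := SimpleGraph.dist_self
  have hNCr : ¬ NC G r r := fun h => h w1 hw1adj (by omega)
  have hw1r : w1 ≠ r := hw1adj.ne'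
  -- root values
  have hroot1 : rdf G r 1 r = ∅ := rdf_val1 (by omega)
  have hroot2 : rdf G r 2 r = {0} := rdf_val2 (by omega)
  have hroot3 : rdf G r 3 r = ∅ := by
    rw [rdf_val3 (by omega), if_neg hNCr]
  -- generic conclusion helper
  have final : ∀ (F0 F1 F2 F3 : V → Finset (Fin 2)),
      G.IsRainbowDF F0 → G.IsRainbowDF F1 → G.IsRainbowDF F2 → G.IsRainbowDF F3 →
      (∑ v, ((F0 v).card + (F1 v).card + (F2 v).card + (F3 v).card)) ≤ 3 * Fintype.card V →
      4 * G.rainbowNum 2 ≤ 3 * Fintype.card V := by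
    intro F0 F1 F2 F3 h0 h1 h2 h3 hs
    have e0 : G.rainbowNum 2 ≤ ∑ v, (F0 v).card := Nat.sInf_le ⟨F0, h0, rfl⟩
    have e1 : G.rainbowNum 2 ≤ ∑ v, (F1 v).card := Nat.sInf_le ⟨F1, h1, rfl⟩
    have e2 : G.rainbowNum 2 ≤ ∑ v, (F2 v).card := Nat.sInf_le ⟨F2, h2, rfl⟩
    have e3 : G.rainbowNum 2 ≤ ∑ v, (F3 v).card := Nat.sInf_le ⟨F3, h3, rfl⟩
    simp only [Finset.sum_add_distrib] at hs
    omega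
  have ptwise : ∀ (F0 F1 F2 F3 : V → Finset (Fin 2)),
      (∀ v, (F0 v).card + (F1 v).card + (F2 v).card + (F3 v).card ≤ 3) →
      (∑ v, ((F0 v).card + (F1 v).card + (F2 v).card + (F3 v).card)) ≤ 3 * Fintype.card V := by
    intro F0 F1 F2 F3 hb
    calc ∑ v, ((F0 v).card + (F1 v).card + (F2 v).card + (F3 v).card)
        ≤ ∑ _v : V, 3 := Finset.sum_le_sum (fun v _ => hb v)
      _ = 3 * Fintype.card V := by
          rw [Finset.sum_const, Finset.card_univ, smul_eq_mul, mul_comm]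
  -- shifts 0 and 2 are always the plain pattern
  have hval0 : G.IsRainbowDF (rdf G r 0) := by
    refine valid_main (r := r) hG 0 _ (fun v _ h => h) (fun u _ _ => rfl) (fun _ => rfl) ?_
    intro h
    exfalso
    rw [rdf_val0 (by omega)] at h
    by_cases hcc : HCC G r r
    · rw [if_pos hcc] at h; exact Finset.univ_nonempty.ne_empty h
    · rw [if_neg hcc] at h; simp at h
  have hval2 : G.IsRainbowDF (rdf G r 2) := by
    refine valid_main (r := r) hG 2 _ (fun v _ h => h) (fun u _ _ => rfl) (fun _ => rfl) ?_
    intro h; rw [hroot2] at h; simp at h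
  by_cases hA : ∃ x, G.Adj r x ∧ NC G r x
  · -- Case A : the root has a childless child x₀
    obtain ⟨x₀, hx0adj, hx0nc⟩ := hA
    have hx0d : G.dist r x₀ = 1 := adj_root_dist hx0adj
    have hx0r : x₀ ≠ r := hx0adj.ne'
    -- a second child y ≠ x₀
    have hy : ∃ y, G.Adj r y ∧ y ≠ x₀ := by
      by_cases hdeep : ∃ z, 2 ≤ G.dist r z
      · obtain ⟨z, hz⟩ := hdeep
        obtain ⟨w2, hw2⟩ := exists_dist_eq (r := r) hG (G.dist r z) z rfl 2 hz
        obtain ⟨p, hpadj, hp⟩ := exists_parent (r := r) (v := w2) hG (by omega)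
        have hpd : G.dist r p = 1 := by omega
        refine ⟨p, SimpleGraph.dist_eq_one_iff_adj.mp hpd, ?_⟩
        intro h
        rw [h] at hpadj hpd
        exact hx0nc w2 hpadj.symm (by omega)
      · push_neg at hdeep
        have hmemx : x₀ ∈ Finset.univ.erase r := Finset.mem_erase.mpr ⟨hx0r, Finset.mem_univ _⟩
        have hcard : ((Finset.univ.erase r).erase x₀).card = Fintype.card V - 2 := by
          rw [Finset.card_erase_of_mem hmemx, Finset.card_erase_of_mem (Finset.mem_univ r),
            Finset.card_univ]
          omega
        have hnon : ((Finset.univ.erase r).erase x₀).Nonempty := by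
          rw [← Finset.card_pos, hcard]; omega
        obtain ⟨y, hy'⟩ := hnon
        rw [Finset.mem_erase, Finset.mem_erase] at hy'
        have hyr : y ≠ r := hy'.2.1
        have hyd0 : G.dist r y ≠ 0 := fun h => hyr ((dist_zero_iff hG).mp h)
        have hyd : G.dist r y = 1 := by have := hdeep y; omega
        exact ⟨y, SimpleGraph.dist_eq_one_iff_adj.mp hyd, hy'.1⟩
    obtain ⟨y, hyadj, hyx⟩ := hy
    have hyd : G.dist r y = 1 := adj_root_dist hyadj
    set F1 : V → Finset (Fin 2) := Function.update (rdf G r 1) x₀ {1} with hF1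
    set F3 : V → Finset (Fin 2) := Function.update (rdf G r 3) x₀ {0} with hF3
    have hF1x : F1 x₀ = {1} := Function.update_self _ _ _
    have hF3x : F3 x₀ = {0} := Function.update_self _ _ _
    have hF1n : ∀ u, u ≠ x₀ → F1 u = rdf G r 1 u := fun u hu => Function.update_of_ne hu _ _
    have hF3n : ∀ u, u ≠ x₀ → F3 u = rdf G r 3 u := fun u hu => Function.update_of_ne hu _ _
    have hval1 : G.IsRainbowDF F1 := by
      refine valid_main (r := r) hG 1 _ ?_ ?_ (by omega) ?_
      · intro v hvr hv
        by_cases hvx : v = x₀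
        · rw [hvx, hF1x] at hv; simp at hv
        · rwa [hF1n v hvx] at hv
      · intro u hur hcond
        refine hF1n u ?_
        intro h
        rw [h] at hcond
        rcases hcond with h1 | h1
        · exact h1 hx0nc
        · omega
      · intro _ c
        fin_cases c
        · refine ⟨y, hyadj, ?_⟩
          rw [hF1n y hyx, rdf_val2 (by omega)]
          simp
        · refine ⟨x₀, hx0adj, ?_⟩
          rw [hF1x]; simp
    have hval3 : G.IsRainbowDF F3 := by
      refine valid_main (r := r) hG 3 _ ?_ ?_ (by omega) ?_
      · intro v hvr hv
        by_cases hvx : v = x₀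
        · rw [hvx, hF3x] at hv; simp at hv
        · rwa [hF3n v hvx] at hv
      · intro u hur hcond
        refine hF3n u ?_
        intro h
        rw [h] at hcond
        rcases hcond with h1 | h1
        · exact h1 hx0nc
        · omega
      · intro _ c
        fin_cases c
        · refine ⟨x₀, hx0adj, ?_⟩
          rw [hF3x]; simp
        · refine ⟨y, hyadj, ?_⟩
          rw [hF3n y hyx, rdf_val0 (by omega)]
          by_cases hcc : HCC G r y <;> simp [hcc]
    refine final (rdf G r 0) F1 (rdf G r 2) F3 hval0 hval1 hval2 hval3 (ptwise _ _ _ _ ?_)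
    intro v
    by_cases hvx : v = x₀
    · rw [hvx, hF1x, hF3x, rdf_val1 (by omega), rdf_val3 (by omega), if_pos hx0nc]
      simp
    · rw [hF1n v hvx, hF3n v hvx]
      exact qsum4 v
  · -- the root has no childless child
    have hAall : ∀ x, G.Adj r x → ¬ NC G r x := by
      intro x hx hnc; exact hA ⟨x, hx, hnc⟩
    have hHCCr : ¬ HCC G r r := by
      rintro ⟨u, hu, -, hnc⟩; exact hAall u hu hnc
    set F1 : V → Finset (Fin 2) := Function.update (rdf G r 1) r {1} with hF1
    have hF1r : F1 r = {1} := Function.update_self _ _ _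
    have hF1n : ∀ u, u ≠ r → F1 u = rdf G r 1 u := fun u hu => Function.update_of_ne hu _ _
    have hval1 : G.IsRainbowDF F1 := by
      refine valid_main (r := r) hG 1 _ ?_ ?_ (by omega) ?_
      · intro v hvr hv; rwa [hF1n v hvr] at hv
      · intro u hur _; exact hF1n u hur
      · intro h; rw [hF1r] at h; simp at h
    have hq0r : (rdf G r 0 r).card = 1 := by
      rw [rdf_val0 (by omega), if_neg hHCCr]; simp
    by_cases hB : ∃ u, G.Adj r u ∧ HCC G r u
    · -- Case B : some child of the root has a childless child
      obtain ⟨u₀, hu0adj, hu0cc⟩ := hB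
      have hu0d : G.dist r u₀ = 1 := adj_root_dist hu0adj
      have hval3 : G.IsRainbowDF (rdf G r 3) := by
        refine valid_main (r := r) hG 3 _ (fun v _ h => h) (fun u _ _ => rfl) (fun _ => rfl) ?_
        intro _ c
        refine ⟨u₀, hu0adj, ?_⟩
        rw [rdf_val0 (by omega), if_pos hu0cc]
        simp
      refine final (rdf G r 0) F1 (rdf G r 2) (rdf G r 3) hval0 hval1 hval2 hval3
        (ptwise _ _ _ _ ?_)
      intro v
      by_cases hvr : v = r
      · rw [hvr, hF1r, hq0r, hroot2, hroot3]; simp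
      · rw [hF1n v hvr]
        exact qsum4 v
    · -- Case C : no child of the root has a childless child
      have hBall : ∀ u, G.Adj r u → ¬ HCC G r u := by
        intro u hu hcc; exact hB ⟨u, hu, hcc⟩
      set F3 : V → Finset (Fin 2) := Function.update (rdf G r 3) r {0} with hF3
      have hF3r : F3 r = {0} := Function.update_self _ _ _
      have hF3n : ∀ u, u ≠ r → F3 u = rdf G r 3 u := fun u hu => Function.update_of_ne hu _ _
      have hval3 : G.IsRainbowDF F3 := by
        refine valid_main (r := r) hG 3 _ ?_ ?_ (by omega) ?_
        · intro v hvr hv; rwa [hF3n v hvr] at hv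
        · intro u hur _; exact hF3n u hur
        · intro h; rw [hF3r] at h; simp at h
      refine final (rdf G r 0) F1 (rdf G r 2) F3 hval0 hval1 hval2 hval3 ?_
      set Q : V → ℕ := fun v =>
        (rdf G r 0 v).card + (F1 v).card + (rdf G r 2 v).card + (F3 v).card with hQ
      show ∑ v, Q v ≤ 3 * Fintype.card V
      have hQr : Q r = 4 := by
        rw [hQ]; simp only
        rw [hq0r, hF1r, hroot2, hF3r]; simp
      have hQw1 : Q w1 = 2 := by
        rw [hQ]; simp only
        rw [hF1n w1 hw1r, hF3n w1 hw1r, rdf_val1 (by omega), rdf_val2 (by omega),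
          rdf_val3 (by omega), rdf_val0 (by omega), if_neg (hAall w1 hw1adj),
          if_neg (hBall w1 hw1adj)]
        simp
      have hmemw : w1 ∈ Finset.univ.erase r := Finset.mem_erase.mpr ⟨hw1r, Finset.mem_univ _⟩
      have hsplit1 : ∑ v, Q v = Q r + ∑ v ∈ Finset.univ.erase r, Q v :=
        (Finset.add_sum_erase _ _ (Finset.mem_univ r)).symm
      have hsplit2 : ∑ v ∈ Finset.univ.erase r, Q v
          = Q w1 + ∑ v ∈ (Finset.univ.erase r).erase w1, Q v :=
        (Finset.add_sum_erase _ _ hmemw).symm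
      have hrest : ∑ v ∈ (Finset.univ.erase r).erase w1, Q v
          ≤ ((Finset.univ.erase r).erase w1).card * 3 := by
        have hb : ∀ v ∈ (Finset.univ.erase r).erase w1, Q v ≤ 3 := by
          intro v hv
          rw [Finset.mem_erase, Finset.mem_erase] at hv
          rw [hQ]; simp only
          rw [hF1n v hv.2.1, hF3n v hv.2.1]
          exact qsum4 v
        simpa [smul_eq_mul] using Finset.sum_le_card_nsmul _ _ 3 hb
      have hcard2 : ((Finset.univ.erase r).erase w1).card = Fintype.card V - 2 := by
        rw [Finset.card_erase_of_mem hmemw, Finset.card_erase_of_mem (Finset.mem_univ r),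
          Finset.card_univ]
        omega
      rw [hsplit1, hsplit2, hQr, hQw1]
      rw [hcard2] at hrest
      omega
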